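/- Let σ : Fin N → Fin q, let J^k ∈ ℝ^{N×N} be the diagonal cluster-indicator matrices, let A ∈ ℝ^{N×N}, let F^1, …, F^q and H be m×m real matrices, and let T ∈ ℝ^{N×N} satisfy T·Tᵀ = I_N and T_{ij} = 0 whenever σ i ≠ σ j. Then (T ⊗ I_m)·(∑_{k=1}^q J^k ⊗ F^k + A ⊗ H)·(Tᵀ ⊗ I_m) = ∑_{k=1}^q J^k ⊗ F^k + (T·A·Tᵀ) ⊗ H, where ⊗ denotes the Kronecker product of matrices. -/
import Mathlib


open Matrix Kronecker

/-- Transformation of the global dynamics matrix into the IRR coordinate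
system (Eq. (8) of the paper):
`(T ⊗ I_m)(∑_k J^k ⊗ F^k + A ⊗ H)(Tᵀ ⊗ I_m) = ∑_k J^k ⊗ F^k + (TATᵀ) ⊗ H`. -/
theorem stmt_6 (N q m : ℕ) (σ : Fin N → Fin q)
    (A : Matrix (Fin N) (Fin N) ℝ)
    (F : Fin q → Matrix (Fin m) (Fin m) ℝ) (H : Matrix (Fin m) (Fin m) ℝ)
    (T : Matrix (Fin N) (Fin N) ℝ) (hTT : T * Tᵀ = 1)
    (hsupp : ∀ i j, σ i ≠ σ j → T i j = 0)
    (J : Fin q → Matrix (Fin N) (Fin N) ℝ)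
    (hJ : ∀ k, J k = Matrix.diagonal (fun i => if σ i = k then (1 : ℝ) else 0)) :
    (T ⊗ₖ (1 : Matrix (Fin m) (Fin m) ℝ)) * (∑ k, J k ⊗ₖ F k + A ⊗ₖ H) *
        (Tᵀ ⊗ₖ (1 : Matrix (Fin m) (Fin m) ℝ))
      = ∑ k, J k ⊗ₖ F k + (T * A * Tᵀ) ⊗ₖ H := by
  have hcomm : ∀ k, T * J k = J k * T := by
    intro k
    ext i j
    simp only [hJ, Matrix.mul_apply, Matrix.diagonal_apply]
    rw [Finset.sum_eq_single j, Finset.sum_eq_single i]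
    · by_cases h : σ i = σ j
      · simp [h]
      · simp [hsupp i j h]
    · intro b _ hb; rw [if_neg (fun h => hb h.symm), zero_mul]
    · simp
    · intro b _ hb; rw [if_neg hb, mul_zero]
    · simp
  have hJk : ∀ k, T * J k * Tᵀ = J k := by
    intro k
    rw [hcomm, mul_assoc, hTT, mul_one]
  rw [mul_add, add_mul, Finset.mul_sum, Finset.sum_mul]
  congr 1
  · refine Finset.sum_congr rfl fun k _ => ?_
    rw [← Matrix.mul_kronecker_mul, ← Matrix.mul_kronecker_mul, one_mul, mul_one,
      hJk]
  · rw [← Matrix.mul_kronecker_mul, ← Matrix.mul_kronecker_mul, one_mul, mul_one]
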